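/- Let P : ℂ → ℂ be a monic polynomial of degree D ≥ 2 and let G(z) = lim_{n→∞} D^{-n} log⁺|P^{∘n}(z)| be its Green's function. Then G is continuous on ℂ, satisfies G(P(z)) = D·G(z) for all z ∈ ℂ, and G(z) = 0 if and only if z belongs to the filled Julia set K_P = {z : the orbit (P^{∘n}(z))_{n≥0} is bounded}. -/

import Mathlib

open Filter

private noncomputable def lplus (x : ℝ) : ℝ := Real.log (max 1 x)

private lemma lp_eq {x : ℝ} (hx : 0 ≤ x) : max (Real.log x) 0 = lplus x := by
  unfold lplus
  rcases le_or_gt x 1 with h | h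
  · rw [max_eq_right (Real.log_nonpos hx h), max_eq_left h, Real.log_one]
  · rw [max_eq_left (Real.log_nonneg h.le), max_eq_right h.le]

private lemma lp_nonneg (x : ℝ) : 0 ≤ lplus x := Real.log_nonneg (le_max_left _ _)

private lemma lp_pos (x : ℝ) : (0:ℝ) < max 1 x := lt_of_lt_of_le one_pos (le_max_left _ _)

private lemma lp_mono {x y : ℝ} (h : x ≤ y) : lplus x ≤ lplus y :=
  Real.log_le_log (lp_pos x) (max_le_max le_rfl h)

private lemma lp_mul {a b : ℝ} (ha : 0 ≤ a) (hb : 0 ≤ b) : lplus (a * b) ≤ lplus a + lplus b := by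
  unfold lplus
  rw [← Real.log_mul (ne_of_gt (lp_pos a)) (ne_of_gt (lp_pos b))]
  apply Real.log_le_log (lp_pos _)
  apply max_le
  · have : (1:ℝ) * 1 ≤ max 1 a * max 1 b :=
      mul_le_mul (le_max_left _ _) (le_max_left _ _) one_pos.le
        (le_trans zero_le_one (le_max_left _ _))
    linarith
  · exact mul_le_mul (le_max_right _ _) (le_max_right _ _) hb
      (le_trans zero_le_one (le_max_left _ _))

private lemma log_le_lp {x : ℝ} (hx : 0 < x) : Real.log x ≤ lplus x :=
  Real.log_le_log hx (le_max_right _ _)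

private lemma lp_of_one_le {x : ℝ} (hx : 1 ≤ x) : lplus x = Real.log x := by
  unfold lplus; rw [max_eq_right hx]

/-- The greenKey uniform bound: `|log⁺|P(w)| - D log⁺|w||` is bounded on `ℂ`. -/
private lemma greenKey (D : ℕ) (hD : 2 ≤ D) (P : Polynomial ℂ) (hmonic : P.Monic)
    (hdeg : P.natDegree = D) :
    ∃ C : ℝ, 0 ≤ C ∧ ∀ w : ℂ, |lplus ‖P.eval w‖ - D * lplus ‖w‖| ≤ C := by
  set B : ℝ := ∑ i ∈ Finset.range D, ‖P.coeff i‖ with hB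
  have hB0 : 0 ≤ B := Finset.sum_nonneg fun i _ => norm_nonneg _
  have hlt : P.natDegree < D + 1 := by omega
  have hsub : ∀ w : ℂ, P.eval w - w ^ D = ∑ i ∈ Finset.range D, P.coeff i * w ^ i := by
    intro w
    rw [Polynomial.eval_eq_sum_range' hlt w, Finset.sum_range_succ]
    have : P.coeff D = 1 := by rw [← hdeg]; exact hmonic.coeff_natDegree
    rw [this, one_mul]; ring
  have hM1 : ∀ w : ℂ, (1:ℝ) ≤ max 1 ‖w‖ := fun w => le_max_left _ _
  have htail : ∀ w : ℂ, ‖P.eval w - w ^ D‖ ≤ B * (max 1 ‖w‖) ^ (D - 1) := by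
    intro w
    rw [hsub w]
    calc ‖∑ i ∈ Finset.range D, P.coeff i * w ^ i‖
        ≤ ∑ i ∈ Finset.range D, ‖P.coeff i * w ^ i‖ := norm_sum_le _ _
      _ ≤ ∑ i ∈ Finset.range D, ‖P.coeff i‖ * (max 1 ‖w‖) ^ (D - 1) := by
          apply Finset.sum_le_sum
          intro i hi
          rw [norm_mul, norm_pow]
          apply mul_le_mul_of_nonneg_left _ (norm_nonneg _)
          calc ‖w‖ ^ i ≤ (max 1 ‖w‖) ^ i :=
                pow_le_pow_left₀ (norm_nonneg _) (le_max_right _ _) i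
            _ ≤ (max 1 ‖w‖) ^ (D - 1) := by
                apply pow_le_pow_right₀ (hM1 w)
                have := Finset.mem_range.mp hi; omega
      _ = B * (max 1 ‖w‖) ^ (D - 1) := by rw [← Finset.sum_mul]
  -- upper bound
  have hupper : ∀ w : ℂ, lplus ‖P.eval w‖ - D * lplus ‖w‖ ≤ lplus (1 + B) := by
    intro w
    set M : ℝ := max 1 ‖w‖ with hMdef
    have hMD : lplus ‖w‖ = Real.log M := rfl
    have h1 : ‖P.eval w‖ ≤ (1 + B) * M ^ D := by
      calc ‖P.eval w‖ = ‖w ^ D + (P.eval w - w ^ D)‖ := by ring_nf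
        _ ≤ ‖w ^ D‖ + ‖P.eval w - w ^ D‖ := norm_add_le _ _
        _ ≤ M ^ D + B * M ^ (D - 1) := by
            apply add_le_add _ (htail w)
            rw [norm_pow]
            exact pow_le_pow_left₀ (norm_nonneg _) (le_max_right _ _) D
        _ ≤ M ^ D + B * M ^ D := by
            have : M ^ (D - 1) ≤ M ^ D := pow_le_pow_right₀ (hM1 w) (by omega)
            nlinarith
        _ = (1 + B) * M ^ D := by ring
    have h2 : lplus ‖P.eval w‖ ≤ lplus ((1 + B) * M ^ D) := lp_mono h1
    have h3 : lplus ((1 + B) * M ^ D) ≤ lplus (1 + B) + lplus (M ^ D) :=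
      lp_mul (by linarith) (pow_nonneg (le_trans zero_le_one (hM1 w)) D)
    have h4 : lplus (M ^ D) = D * Real.log M := by
      rw [lp_of_one_le (one_le_pow₀ (hM1 w)), Real.log_pow]
    rw [hMD]
    linarith
  -- lower bound
  set R : ℝ := max 1 (2 * B) with hR
  have hR1 : (1:ℝ) ≤ R := le_max_left _ _
  have hlower : ∀ w : ℂ, -(max (Real.log 2) (D * lplus R)) ≤ lplus ‖P.eval w‖ - D * lplus ‖w‖ := by
    intro w
    rcases le_or_gt R ‖w‖ with h | h
    · -- escape region
      have hw1 : (1:ℝ) ≤ ‖w‖ := le_trans hR1 h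
      have hwpos : (0:ℝ) < ‖w‖ := lt_of_lt_of_le one_pos hw1
      have hMw : max 1 ‖w‖ = ‖w‖ := max_eq_right hw1
      have hBle : B ≤ ‖w‖ / 2 := by
        have : 2 * B ≤ R := le_max_right _ _
        linarith
      have hDpos : 1 ≤ D := by omega
      have hpow : ‖w‖ ^ (D - 1) * ‖w‖ = ‖w‖ ^ D := by
        rw [← pow_succ]; congr 1; omega
      have hlow : ‖w‖ ^ D / 2 ≤ ‖P.eval w‖ := by
        have h5 : ‖w ^ D‖ ≤ ‖P.eval w‖ + ‖P.eval w - w ^ D‖ := by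
          calc ‖w ^ D‖ = ‖P.eval w - (P.eval w - w ^ D)‖ := by ring_nf
            _ ≤ ‖P.eval w‖ + ‖P.eval w - w ^ D‖ := norm_sub_le _ _
        have h6 : ‖P.eval w - w ^ D‖ ≤ (‖w‖ / 2) * ‖w‖ ^ (D - 1) := by
          calc ‖P.eval w - w ^ D‖ ≤ B * (max 1 ‖w‖) ^ (D - 1) := htail w
            _ = B * ‖w‖ ^ (D - 1) := by rw [hMw]
            _ ≤ (‖w‖ / 2) * ‖w‖ ^ (D - 1) :=
                mul_le_mul_of_nonneg_right hBle (pow_nonneg hwpos.le _)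
        have h7 : (‖w‖ / 2) * ‖w‖ ^ (D - 1) = ‖w‖ ^ D / 2 := by
          rw [div_mul_eq_mul_div, mul_comm, hpow]
        rw [norm_pow] at h5
        linarith
      have hpos : (0:ℝ) < ‖w‖ ^ D / 2 := by positivity
      have h8 : Real.log (‖w‖ ^ D / 2) ≤ lplus ‖P.eval w‖ :=
        le_trans (Real.log_le_log hpos hlow) (log_le_lp (lt_of_lt_of_le hpos hlow))
      have h9 : Real.log (‖w‖ ^ D / 2) = D * Real.log ‖w‖ - Real.log 2 := by
        rw [Real.log_div (by positivity) (by norm_num), Real.log_pow]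
      have h10 : lplus ‖w‖ = Real.log ‖w‖ := lp_of_one_le hw1
      have h11 : -(max (Real.log 2) (D * lplus R)) ≤ -(Real.log 2) :=
        neg_le_neg (le_max_left _ _)
      rw [h10]
      linarith
    · -- bounded region
      have h12 : lplus ‖w‖ ≤ lplus R := lp_mono h.le
      have h13 : (D:ℝ) * lplus ‖w‖ ≤ D * lplus R :=
        mul_le_mul_of_nonneg_left h12 (by positivity)
      have h14 : -(max (Real.log 2) (D * lplus R)) ≤ -(D * lplus R) :=
        neg_le_neg (le_max_right _ _)
      have := lp_nonneg ‖P.eval w‖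
      linarith
  refine ⟨max (lplus (1 + B)) (max (Real.log 2) ((D:ℝ) * lplus R)), le_trans (lp_nonneg _) (le_max_left _ _), fun w => ?_⟩
  rw [abs_le]
  constructor
  · calc -(max (lplus (1+B)) (max (Real.log 2) ((D:ℝ) * lplus R)))
        ≤ -(max (Real.log 2) ((D:ℝ) * lplus R)) := neg_le_neg (le_max_right _ _)
      _ ≤ _ := hlower w
  · exact le_trans (hupper w) (le_max_left _ _)

/-- The Green's function `G(z) = lim D^{-n} log⁺|P^n(z)|` of a monic
polynomial `P` of degree `D ≥ 2` is continuous, satisfies `G(P(z)) = D·G(z)`,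
and vanishes exactly on the filled Julia set. -/
theorem stmt5 (D : ℕ) (hD : 2 ≤ D) (P : Polynomial ℂ) (hmonic : P.Monic)
    (hdeg : P.natDegree = D) (G : ℂ → ℝ)
    (hG : ∀ z, Filter.Tendsto
      (fun n => ((D : ℝ) ^ n)⁻¹ * max (Real.log (‖(fun w => P.eval w)^[n] z‖)) 0)
      Filter.atTop (nhds (G z))) :
    Continuous G ∧ (∀ z, G (P.eval z) = D * G z) ∧
    ∀ z, (G z = 0 ↔ Bornology.IsBounded (Set.range fun n => (fun w => P.eval w)^[n] z)) := by
  obtain ⟨C, hC0, hC⟩ := greenKey D hD P hmonic hdeg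
  have hD1 : (1:ℝ) < D := by exact_mod_cast lt_of_lt_of_le one_lt_two hD
  have hD0 : (0:ℝ) < D := lt_trans one_pos hD1
  set g : ℕ → ℂ → ℝ := fun n z => ((D : ℝ) ^ n)⁻¹ * lplus ‖(fun w => P.eval w)^[n] z‖ with hg
  have hG' : ∀ z, Tendsto (fun n => g n z) atTop (nhds (G z)) := by
    intro z
    have := hG z
    simp only [lp_eq (norm_nonneg _)] at this
    exact this
  have hpowpos : ∀ n : ℕ, (0:ℝ) < (D:ℝ) ^ n := fun n => pow_pos hD0 n
  -- step estimate
  have hstep : ∀ n (z : ℂ), |g (n+1) z - g n z| ≤ C * ((D:ℝ) ^ (n+1))⁻¹ := by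
    intro n z
    set w := (fun w => P.eval w)^[n] z with hw
    have h1 : g (n+1) z = ((D:ℝ) ^ (n+1))⁻¹ * lplus ‖P.eval w‖ := by
      simp only [hg, Function.iterate_succ_apply', hw]
    have h2 : g n z = ((D:ℝ) ^ (n+1))⁻¹ * ((D:ℝ) * lplus ‖w‖) := by
      simp only [hg, hw]
      rw [pow_succ]
      field_simp
    rw [h1, h2, ← mul_sub, abs_mul, abs_of_pos (inv_pos.mpr (hpowpos (n+1))), mul_comm]
    exact mul_le_mul_of_nonneg_right (hC w) (inv_pos.mpr (hpowpos (n+1))).le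
  -- Cauchy estimate
  have hcauchy : ∀ (z : ℂ) (m n : ℕ), m ≤ n →
      |g n z - g m z| ≤ C * (((D:ℝ) ^ m)⁻¹ - ((D:ℝ) ^ n)⁻¹) := by
    intro z m n hmn
    induction n, hmn using Nat.le_induction with
    | base => simp
    | succ n hmn ih =>
      have h1 := hstep n z
      have h2 : |g (n+1) z - g m z| ≤ |g (n+1) z - g n z| + |g n z - g m z| := by
        have := abs_sub_abs_le_abs_sub (g (n+1) z - g m z) (g n z - g m z)
        calc |g (n+1) z - g m z| = |(g (n+1) z - g n z) + (g n z - g m z)| := by ring_nf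
          _ ≤ _ := abs_add_le _ _
      have h3 : ((D:ℝ) ^ (n+1))⁻¹ * 2 ≤ ((D:ℝ) ^ n)⁻¹ := by
        rw [pow_succ, mul_inv]
        have hD2 : (2:ℝ) ≤ D := by exact_mod_cast hD
        have : ((D:ℝ))⁻¹ * 2 ≤ 1 := by
          rw [inv_mul_le_iff₀ hD0]; linarith
        calc ((D:ℝ) ^ n)⁻¹ * (D:ℝ)⁻¹ * 2 = ((D:ℝ) ^ n)⁻¹ * ((D:ℝ)⁻¹ * 2) := by ring
          _ ≤ ((D:ℝ) ^ n)⁻¹ * 1 := by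
              apply mul_le_mul_of_nonneg_left this (inv_pos.mpr (hpowpos n)).le
          _ = ((D:ℝ) ^ n)⁻¹ := mul_one _
      nlinarith [hpowpos (n+1), hpowpos n, inv_pos.mpr (hpowpos (n+1))]
  -- uniform approximation
  have happrox : ∀ (z : ℂ) (m : ℕ), |G z - g m z| ≤ C * ((D:ℝ) ^ m)⁻¹ := by
    intro z m
    have h1 : Tendsto (fun n => |g n z - g m z|) atTop (nhds |G z - g m z|) :=
      ((hG' z).sub tendsto_const_nhds).abs
    apply le_of_tendsto h1
    filter_upwards [eventually_ge_atTop m] with n hn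
    calc |g n z - g m z| ≤ C * (((D:ℝ) ^ m)⁻¹ - ((D:ℝ) ^ n)⁻¹) := hcauchy z m n hn
      _ ≤ C * ((D:ℝ) ^ m)⁻¹ := by
          apply mul_le_mul_of_nonneg_left _ hC0
          have := (inv_pos.mpr (hpowpos n)).le
          linarith
  -- continuity of g n
  have hlpcont : Continuous fun x : ℝ => lplus x := by
    apply continuous_iff_continuousAt.mpr
    intro x
    exact (Real.continuousAt_log (ne_of_gt (lp_pos x))).comp
      ((continuous_const.max continuous_id).continuousAt)
  have hgcont : ∀ n, Continuous (g n) := by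
    intro n
    exact continuous_const.mul (hlpcont.comp (continuous_norm.comp (P.continuous.iterate n)))
  -- rate tends to zero
  have hrate : Tendsto (fun m : ℕ => C * ((D:ℝ) ^ m)⁻¹) atTop (nhds 0) := by
    have h1 : Tendsto (fun m : ℕ => ((D:ℝ) ^ m)⁻¹) atTop (nhds 0) :=
      tendsto_inv_atTop_zero.comp (tendsto_pow_atTop_atTop_of_one_lt hD1)
    simpa using h1.const_mul C
  -- continuity of G
  have hcont : Continuous G := by
    have hunif : TendstoUniformly g G atTop := by
      rw [Metric.tendstoUniformly_iff]
      intro ε hε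
      filter_upwards [hrate.eventually (gt_mem_nhds hε)] with n hn x
      rw [Real.dist_eq]
      exact lt_of_le_of_lt (happrox x n) hn
    exact hunif.continuous (Eventually.of_forall hgcont).frequently
  -- functional equation
  have hfeq : ∀ z, G (P.eval z) = D * G z := by
    intro z
    have h2 : ∀ n, g n (P.eval z) = D * g (n+1) z := by
      intro n
      simp only [hg, ← Function.iterate_succ_apply]
      rw [pow_succ]
      field_simp
    have h1 : Tendsto (fun n => (D:ℝ) * g (n+1) z) atTop (nhds (G (P.eval z))) := by
      have := hG' (P.eval z)
      simpa only [h2] using this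
    have h3 : Tendsto (fun n => (D:ℝ) * g (n+1) z) atTop (nhds ((D:ℝ) * G z)) := by
      simpa using ((hG' z).comp (tendsto_add_atTop_nat 1)).const_mul (D:ℝ)
    exact tendsto_nhds_unique h1 h3
  refine ⟨hcont, hfeq, fun z => ⟨fun hz => ?_, fun hb => ?_⟩⟩
  · -- G z = 0 → bounded
    by_contra hb
    rw [isBounded_iff_forall_norm_le] at hb
    push_neg at hb
    obtain ⟨x, ⟨m, hm⟩, hx⟩ := hb (Real.exp (C + 1))
    -- G of iterate
    have hiter : ∀ k, G ((fun w => P.eval w)^[k] z) = (D:ℝ) ^ k * G z := by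
      intro k
      induction k with
      | zero => simp
      | succ k ih =>
        rw [Function.iterate_succ_apply', hfeq, ih, pow_succ]; ring
    have hGx : G x = 0 := by
      rw [← hm, hiter m, hz, mul_zero]
    have h1 : |G x - g 0 x| ≤ C := by
      have := happrox x 0
      simpa using this
    have h2 : g 0 x = lplus ‖x‖ := by simp [hg]
    have hxpos : (0:ℝ) < ‖x‖ := lt_of_lt_of_le (Real.exp_pos _) hx.le
    have h3 : Real.log ‖x‖ ≤ lplus ‖x‖ := log_le_lp hxpos
    have h4 : C + 1 ≤ Real.log ‖x‖ := by
      have := Real.log_le_log (Real.exp_pos _) hx.le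
      rwa [Real.log_exp] at this
    rw [hGx, h2] at h1
    rw [abs_le] at h1
    linarith [h1.1]
  · -- bounded → G z = 0
    rw [isBounded_iff_forall_norm_le] at hb
    obtain ⟨M, hM⟩ := hb
    have hbound : ∀ n, ‖(fun w => P.eval w)^[n] z‖ ≤ M := fun n => hM _ ⟨n, rfl⟩
    have h0 : Tendsto (fun n => g n z) atTop (nhds 0) := by
      apply squeeze_zero (fun n => mul_nonneg (inv_pos.mpr (hpowpos n)).le (lp_nonneg _))
        (g := fun n => ((D:ℝ) ^ n)⁻¹ * lplus M)
      · intro n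
        exact mul_le_mul_of_nonneg_left (lp_mono (hbound n)) (inv_pos.mpr (hpowpos n)).le
      · have h1 : Tendsto (fun m : ℕ => ((D:ℝ) ^ m)⁻¹) atTop (nhds 0) :=
          tendsto_inv_atTop_zero.comp (tendsto_pow_atTop_atTop_of_one_lt hD1)
        simpa using h1.mul_const (lplus M)
    exact tendsto_nhds_unique (hG' z) h0
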